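/- arXiv:hep-th/0605185 — 3 statements merged into one kernel-verified Lean document; each statement's English description precedes it below -/
import Mathlib

section
/- Let N ≥ 1 and μ ∈ ℂ with Im μ ≠ 0. Let R, R_t, R_x, R_y, j_t, j_x, j_y ∈ M_N(ℂ) satisfy: R* = R, R² = R; R_a* = R_a and R_a R + R R_a = R_a for each a ∈ {t,x,y}; and j_a* = −j_a for each a ∈ {t,x,y}. Define B = (μ R_x − R_y + R j_y)(1 − R) and C = μ⁻¹(μ R_y + R_x − R j_x)(1 − R), and assume the Bäcklund relations R(R_t − j_t(1 − R)) = B and R R_t = C hold. Then the following three trace identities hold: Tr(R_t R_t R) = Tr(C C*), Tr(j_t R_t) = Tr(C B* − B C*), and Tr(R j_t R_t) = Tr((C − B) C*). -/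
open Matrix Complex

/-- the pointwise trace identities following from the Bäcklund relations
of Ward's chiral model. Here `R` is a hermitian projection, `Rt, Rx, Ry` its partial
derivatives (hermitian, satisfying the Leibniz consequence `R_a R + R R_a = R_a`),
and `jt, jx, jy` are anti-hermitian (`j_a = J⁻¹∂_a J` for unitary `J`). -/
theorem backlund_trace_identities {N : ℕ} (hN : 1 ≤ N) (μ : ℂ) (hμ : μ.im ≠ 0)
    (R Rt Rx Ry jt jx jy B C : Matrix (Fin N) (Fin N) ℂ)
    (hRherm : Rᴴ = R) (hRproj : R * R = R)
    (hRtherm : Rtᴴ = Rt) (hRxherm : Rxᴴ = Rx) (hRyherm : Ryᴴ = Ry)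
    (hRtLeib : Rt * R + R * Rt = Rt) (hRxLeib : Rx * R + R * Rx = Rx)
    (hRyLeib : Ry * R + R * Ry = Ry)
    (hjt : jtᴴ = -jt) (hjx : jxᴴ = -jx) (hjy : jyᴴ = -jy)
    (hB : B = (μ • Rx - Ry + R * jy) * (1 - R))
    (hC : C = μ⁻¹ • ((μ • Ry + Rx - R * jx) * (1 - R)))
    (hback1 : R * (Rt - jt * (1 - R)) = B)
    (hback2 : R * Rt = C) :
    (Rt * Rt * R).trace = (C * Cᴴ).trace ∧
    (jt * Rt).trace = (C * Bᴴ - B * Cᴴ).trace ∧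
    (R * jt * Rt).trace = ((C - B) * Cᴴ).trace := by
  have hC' : C = R * Rt := hback2.symm
  have hB' : B = R * Rt - R * jt * (1 - R) := by rw [← hback1]; noncomm_ring
  have hzero : R * Rt * R = 0 := by
    have h : R * (Rt * R + R * Rt) = R * Rt := by rw [hRtLeib]
    rw [mul_add, ← mul_assoc, ← mul_assoc, hRproj] at h
    exact add_eq_right.mp h
  have hCH : Cᴴ = Rt * R := by rw [hC', conjTranspose_mul, hRherm, hRtherm]
  have hBH : Bᴴ = Rt * R + (1 - R) * jt * R := by
    rw [hB']
    simp only [conjTranspose_sub, conjTranspose_mul, conjTranspose_one, hRherm, hRtherm, hjt]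
    noncomm_ring
  have key : ∀ X : Matrix (Fin N) (Fin N) ℂ, (R * X * R).trace = (R * X).trace := by
    intro X
    rw [trace_mul_cycle, hRproj]
  refine ⟨?_, ?_, ?_⟩
  · rw [hCH, hC']
    rw [show R * Rt * (Rt * R) = R * (Rt * Rt * R) from by noncomm_ring,
      trace_mul_comm R, mul_assoc (Rt * Rt) R R, hRproj]
  · have h2m : C * Bᴴ - B * Cᴴ =
        R * (Rt * jt) * R + R * (jt * Rt) * R
          - (R * Rt * R * (jt * R) + R * jt * (R * Rt * R)) := by
      rw [hCH, hBH, hC', hB']; noncomm_ring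
    rw [h2m, hzero]
    simp only [zero_mul, mul_zero, add_zero, sub_zero]
    rw [trace_add, key, key,
      show R * (Rt * jt) = R * Rt * jt from (mul_assoc _ _ _).symm,
      trace_mul_comm (R * Rt) jt,
      show R * (jt * Rt) = R * jt * Rt from (mul_assoc _ _ _).symm,
      trace_mul_comm (R * jt) Rt,
      show Rt * (R * jt) = Rt * R * jt from (mul_assoc _ _ _).symm,
      trace_mul_comm (Rt * R) jt,
      ← trace_add, ← mul_add, add_comm (R * Rt), hRtLeib]
  · have h3m : (C - B) * Cᴴ = R * (jt * Rt) * R - R * jt * (R * Rt * R) := by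
      rw [hCH, hC', hB']; noncomm_ring
    rw [h3m, hzero]
    simp only [mul_zero, sub_zero]
    rw [key, ← mul_assoc]
end

section
/- Let μ ∈ ℂ with Im μ ≠ 0 and set κ = 1 − μ/μ̄. Let J : ℝ³ → U(N) and R : ℝ³ → M_N(ℂ) be differentiable maps with R(p)* = R(p) and R(p)² = R(p) for all p, set M = i(1 − κR) and Ĵ = JM. Then pointwise on ℝ³ the energy densities of Ĵ and J satisfy ℰ̂ − ℰ = Σ_{a ∈ {t,x,y}} Tr( κκ̄ R_a R_a R + κ(1 − κ̄ R) J⁻¹J_a R_a ), where R_a = ∂_a R and J_a = ∂_a J. -/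
open MeasureTheory Matrix Complex

attribute [local instance] Matrix.frobeniusNormedAddCommGroup Matrix.frobeniusNormedSpace

/-- Partial derivative in the `i`-th coordinate direction of `ℝ³ ∋ (t,x,y)`
(`i = 0,1,2` for `t,x,y`). -/
noncomputable def pd {N : ℕ} (i : Fin 3) (f : (Fin 3 → ℝ) → Matrix (Fin N) (Fin N) ℂ)
    (p : Fin 3 → ℝ) : Matrix (Fin N) (Fin N) ℂ :=
  fderiv ℝ f p (Pi.single i 1)

/-- `J⁻¹ ∂ₐJ`. -/
noncomputable def lmc {N : ℕ} (a : Fin 3) (J : (Fin 3 → ℝ) → Matrix (Fin N) (Fin N) ℂ)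
    (p : Fin 3 → ℝ) : Matrix (Fin N) (Fin N) ℂ :=
  (J p)⁻¹ * pd a J p

/-- Energy density `ℰ = −(1/2)Tr((J⁻¹J_t)² + (J⁻¹J_x)² + (J⁻¹J_y)²)`. -/
noncomputable def energyDensity {N : ℕ} (J : (Fin 3 → ℝ) → Matrix (Fin N) (Fin N) ℂ)
    (p : Fin 3 → ℝ) : ℂ :=
  -(1 / 2 : ℂ) *
    (lmc 0 J p * lmc 0 J p + lmc 1 J p * lmc 1 J p + lmc 2 J p * lmc 2 J p).trace

section Aux
attribute [local instance] Matrix.frobeniusNormedRing Matrix.frobeniusNormedAlgebra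

lemma pd_mul {N : ℕ} (a : Fin 3) (f g : (Fin 3 → ℝ) → Matrix (Fin N) (Fin N) ℂ)
    (hf : Differentiable ℝ f) (hg : Differentiable ℝ g) (p : Fin 3 → ℝ) :
    pd a (fun q => f q * g q) p = pd a f p * g p + f p * pd a g p := by
  unfold pd
  erw [fderiv_fun_mul' (hf p) (hg p)]
  simp [smul_eq_mul, add_comm]
  rfl

lemma pd_affine {N : ℕ} (a : Fin 3) (κ : ℂ) (R : (Fin 3 → ℝ) → Matrix (Fin N) (Fin N) ℂ)
    (hR : Differentiable ℝ R) (p : Fin 3 → ℝ) :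
    pd a (fun q => Complex.I • ((1 : Matrix (Fin N) (Fin N) ℂ) - κ • R q)) p
      = (-(Complex.I * κ)) • pd a R p := by
  unfold pd
  have h1 : DifferentiableAt ℝ (fun q => (1 : Matrix (Fin N) (Fin N) ℂ) - κ • R q) p :=
    (differentiableAt_const _).sub ((hR p).const_smul κ)
  erw [fderiv_fun_const_smul h1 Complex.I, fderiv_const_sub, fderiv_fun_const_smul (hR p) κ]
  simp [smul_smul, mul_comm]
  rfl


lemma core {N : ℕ} (κ κ' : ℂ) (hk : κ + κ' = κ * κ')
    (Rp S L M Mi : Matrix (Fin N) (Fin N) ℂ)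
    (hMi : Mi = (-Complex.I) • ((1 : Matrix (Fin N) (Fin N) ℂ) - κ' • Rp))
    (hMMi : M * Mi = 1)
    (hR : Rp * Rp = Rp) (hS : S * Rp + Rp * S = S) (hRSR : Rp * S * Rp = 0) :
    -(1/2 : ℂ) * ((Mi * L * M + (-(Complex.I * κ)) • (Mi * S))
        * (Mi * L * M + (-(Complex.I * κ)) • (Mi * S))).trace
      + (1/2 : ℂ) * (L * L).trace
    = ((κ * κ') • (S * S * Rp)
        + κ • (((1 : Matrix (Fin N) (Fin N) ℂ) - κ' • Rp) * L * S)).trace := by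
  have hMMi' : ∀ X : Matrix (Fin N) (Fin N) ℂ, M * (Mi * X) = X := fun X => by
    rw [← mul_assoc, hMMi, one_mul]
  set c : ℂ := -(Complex.I * κ) with hc
  set A : Matrix (Fin N) (Fin N) ℂ := Mi * L * M with hA
  set B : Matrix (Fin N) (Fin N) ℂ := c • (Mi * S) with hB
  have expand : ((A + B) * (A + B)).trace
      = (A * A).trace + (A * B).trace + (B * A).trace + (B * B).trace := by
    simp only [mul_add, add_mul, Matrix.trace_add]; ring
  have t1 : (A * A).trace = (L * L).trace := by
    rw [hA]
    simp only [mul_assoc, hMMi']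
    rw [Matrix.trace_mul_comm]
    simp only [mul_assoc, hMMi, mul_one]
  have m2 : Mi * L * M * (Mi * S) = Mi * (L * S) := by simp only [mul_assoc, hMMi']
  have t2 : (A * B).trace = c * (Mi * (L * S)).trace := by
    rw [hA, hB, Matrix.mul_smul, Matrix.trace_smul, smul_eq_mul, m2]
  have t3 : (B * A).trace = c * (Mi * (L * S)).trace := by
    rw [hB, Matrix.smul_mul, Matrix.trace_smul, smul_eq_mul, Matrix.trace_mul_comm, m2]
  have t4 : (B * B).trace = (c * c) * ((Mi * S) * (Mi * S)).trace := by
    rw [hB, Matrix.smul_mul, Matrix.mul_smul, Matrix.trace_smul, Matrix.trace_smul,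
      smul_eq_mul, smul_eq_mul, ← mul_assoc]
  have hv2 : (Mi * (L * S)).trace
      = -Complex.I * ((L * S).trace - κ' * ((L * S) * Rp).trace) := by
    rw [hMi]
    rw [Matrix.smul_mul, Matrix.sub_mul, Matrix.one_mul, Matrix.smul_mul]
    rw [Matrix.trace_smul, Matrix.trace_sub, Matrix.trace_smul]
    rw [Matrix.trace_mul_comm Rp (L * S)]
    simp [smul_eq_mul]
  have hMiS : Mi * S = (-Complex.I) • (S - κ' • (Rp * S)) := by
    rw [hMi, Matrix.smul_mul, Matrix.sub_mul, Matrix.one_mul, Matrix.smul_mul]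
  have hRSRS : (Rp * S) * (Rp * S) = 0 := by
    rw [show (Rp * S) * (Rp * S) = (Rp * S * Rp) * S by noncomm_ring, hRSR, Matrix.zero_mul]
  have hSRpS : (S * (Rp * S)).trace = ((S * S) * Rp).trace := by
    rw [Matrix.trace_mul_comm, mul_assoc, Matrix.trace_mul_comm, mul_assoc]
  have hRpSS : ((Rp * S) * S).trace = ((S * S) * Rp).trace := by
    rw [mul_assoc, Matrix.trace_mul_comm]
  have hSS : (S * S).trace = 2 * ((S * S) * Rp).trace := by
    have h2 : ((S * Rp) * S).trace = ((S * S) * Rp).trace := by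
      rw [Matrix.trace_mul_comm, ← mul_assoc]
    have e : (S * S).trace = ((S * Rp) * S).trace + ((Rp * S) * S).trace := by
      rw [← Matrix.trace_add, ← Matrix.add_mul, hS]
    rw [e, h2, hRpSS]; ring
  have hv4 : ((Mi * S) * (Mi * S)).trace
      = (Complex.I * Complex.I)
        * ((2 : ℂ) * ((S*S)*Rp).trace - 2 * κ' * ((S*S)*Rp).trace) := by
    rw [hMiS, Matrix.smul_mul, Matrix.mul_smul, Matrix.trace_smul, Matrix.trace_smul,
      smul_eq_mul, smul_eq_mul]
    have hexp : (S - κ' • (Rp * S)) * (S - κ' • (Rp * S))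
        = S * S - κ' • (S * (Rp * S)) - κ' • ((Rp * S) * S)
          + (κ' * κ') • ((Rp * S) * (Rp * S)) := by
      simp only [Matrix.sub_mul, Matrix.mul_sub, Matrix.smul_mul, Matrix.mul_smul, smul_smul]
      module
    rw [hexp, hRSRS]
    simp only [smul_zero, add_zero, Matrix.trace_sub, Matrix.trace_smul, smul_eq_mul,
      hSRpS, hRpSS, hSS]
    ring
  have hrhs : ((κ * κ') • (S * S * Rp)
      + κ • (((1 : Matrix (Fin N) (Fin N) ℂ) - κ' • Rp) * L * S)).trace
      = (κ * κ') * ((S*S)*Rp).trace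
        + κ * ((L * S).trace - κ' * ((L * S) * Rp).trace) := by
    have h3 : (((1 : Matrix (Fin N) (Fin N) ℂ) - κ' • Rp) * L * S).trace
        = (L * S).trace - κ' * ((L * S) * Rp).trace := by
      rw [Matrix.sub_mul, Matrix.sub_mul, Matrix.one_mul, Matrix.smul_mul, Matrix.smul_mul,
        Matrix.trace_sub, Matrix.trace_smul, smul_eq_mul, mul_assoc Rp L S,
        Matrix.trace_mul_comm Rp (L * S)]
    rw [Matrix.trace_add, Matrix.trace_smul, Matrix.trace_smul, smul_eq_mul, smul_eq_mul, h3]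
  rw [expand, t1, t2, t3, t4, hv2, hv4, hrhs, hc]
  set x := (L * S).trace
  set y := ((L * S) * Rp).trace
  set T := ((S * S) * Rp).trace
  linear_combination (-κ * (x - κ' * y)
      - T * (Complex.I * Complex.I - 1) * κ * κ * (1 - κ')) * Complex.I_mul_I
    + (-T * κ) * hk

end Aux

/-- for unitary `J`, hermitian projection valued `R`, `κ = 1 − μ/μ̄` and
`Ĵ = J · i(1 − κR)`, the difference of energy densities is
`ℰ̂ − ℰ = Σ_a Tr(κκ̄ R_aR_aR + κ(1 − κ̄R)J⁻¹J_aR_a)`. -/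
theorem energy_density_difference {N : ℕ}
    (μ : ℂ) (hμ : μ.im ≠ 0) (κ : ℂ) (hκ : κ = 1 - μ / starRingEnd ℂ μ)
    (J R : (Fin 3 → ℝ) → Matrix (Fin N) (Fin N) ℂ)
    (hJdiff : Differentiable ℝ J) (hRdiff : Differentiable ℝ R)
    (hJunitary : ∀ p, J p ∈ Matrix.unitaryGroup (Fin N) ℂ)
    (hRherm : ∀ p, (R p)ᴴ = R p) (hRproj : ∀ p, R p * R p = R p)
    (Jhat : (Fin 3 → ℝ) → Matrix (Fin N) (Fin N) ℂ)
    (hJhat : Jhat = fun p => J p * (Complex.I • ((1 : Matrix (Fin N) (Fin N) ℂ) - κ • R p))) :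
    ∀ p, energyDensity Jhat p - energyDensity J p =
      ∑ a : Fin 3,
        ((κ * starRingEnd ℂ κ) • (pd a R p * pd a R p * R p)
          + κ • (((1 : Matrix (Fin N) (Fin N) ℂ) - starRingEnd ℂ κ • R p)
              * lmc a J p * pd a R p)).trace := by
  intro p
  have hμ0 : μ ≠ 0 := fun h => hμ (by simp [h])
  have hμ0' : (starRingEnd ℂ) μ ≠ 0 :=
    fun h => hμ0 (by simpa using congrArg (starRingEnd ℂ) h)
  have hk : κ + starRingEnd ℂ κ = κ * starRingEnd ℂ κ := by
    rw [hκ, map_sub, _root_.map_one, map_div₀, Complex.conj_conj]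
    field_simp
    ring
  have hRR : R p * R p = R p := hRproj p
  obtain ⟨Mm, hMm⟩ : ∃ M, M = Complex.I • ((1 : Matrix (Fin N) (Fin N) ℂ) - κ • R p) :=
    ⟨_, rfl⟩
  obtain ⟨Mi, hMi⟩ :
      ∃ M, M = (-Complex.I) • ((1 : Matrix (Fin N) (Fin N) ℂ) - starRingEnd ℂ κ • R p) :=
    ⟨_, rfl⟩
  have hMMi : Mm * Mi = 1 := by
    rw [hMm, hMi, Matrix.smul_mul, Matrix.mul_smul, smul_smul]
    have h1 : Complex.I * -Complex.I = 1 := by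
      rw [mul_neg, Complex.I_mul_I, neg_neg]
    rw [h1, one_smul]
    have h2 : ((1 : Matrix (Fin N) (Fin N) ℂ) - κ • R p)
        * ((1 : Matrix (Fin N) (Fin N) ℂ) - starRingEnd ℂ κ • R p)
        = 1 + (κ * starRingEnd ℂ κ - κ - starRingEnd ℂ κ) • R p := by
      simp only [Matrix.sub_mul, Matrix.mul_sub, Matrix.one_mul, Matrix.mul_one,
        Matrix.smul_mul, Matrix.mul_smul, smul_smul, hRR]
      module
    rw [h2, show κ * starRingEnd ℂ κ - κ - starRingEnd ℂ κ = 0 by linear_combination -hk,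
      zero_smul, add_zero]
  -- unitarity of J
  have hJl : star (J p) * J p = 1 := (hJunitary p).1
  have hJinv : (J p)⁻¹ = star (J p) := Matrix.inv_eq_left_inv hJl
  have hJiJ : ∀ X : Matrix (Fin N) (Fin N) ℂ, (J p)⁻¹ * (J p * X) = X := fun X => by
    rw [← mul_assoc, hJinv, hJl, one_mul]
  -- derivative of Jhat
  have hMdiff : Differentiable ℝ
      (fun q => Complex.I • ((1 : Matrix (Fin N) (Fin N) ℂ) - κ • R q)) :=
    ((differentiable_const _).sub (hRdiff.const_smul κ)).const_smul Complex.I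
  have hpdJhat : ∀ a : Fin 3,
      pd a Jhat p = pd a J p * Mm + J p * ((-(Complex.I * κ)) • pd a R p) := by
    intro a
    rw [hJhat]
    have h := pd_mul a J (fun q => Complex.I • ((1 : Matrix (Fin N) (Fin N) ℂ) - κ • R q))
      hJdiff hMdiff p
    rw [h, pd_affine a κ R hRdiff p, ← hMm]
  have hJhati : (Jhat p)⁻¹ = Mi * (J p)⁻¹ := by
    rw [hJhat]
    show (J p * (Complex.I • ((1 : Matrix (Fin N) (Fin N) ℂ) - κ • R p)))⁻¹ = Mi * (J p)⁻¹
    rw [← hMm, Matrix.mul_inv_rev, Matrix.inv_eq_right_inv hMMi]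
  have hlmcJhat : ∀ a : Fin 3,
      lmc a Jhat p = Mi * lmc a J p * Mm + (-(Complex.I * κ)) • (Mi * pd a R p) := by
    intro a
    unfold lmc
    rw [hJhati, hpdJhat a, mul_add]
    simp only [mul_assoc, Matrix.mul_smul, hJiJ, mul_smul_comm]
  -- projection identities for derivatives of R
  have hS : ∀ a : Fin 3, pd a R p * R p + R p * pd a R p = pd a R p := by
    intro a
    have h := pd_mul a R R hRdiff hRdiff p
    rw [show (fun q => R q * R q) = R from funext hRproj] at h
    exact h.symm
  have hRSR : ∀ a : Fin 3, R p * pd a R p * R p = 0 := by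
    intro a
    have h := congrArg (fun X => R p * X) (hS a)
    simp only [mul_add, ← mul_assoc, hRR] at h
    exact add_eq_right.mp h
  have c0 := core κ (starRingEnd ℂ κ) hk (R p) (pd 0 R p) (lmc 0 J p) Mm Mi hMi hMMi hRR
    (hS 0) (hRSR 0)
  have c1 := core κ (starRingEnd ℂ κ) hk (R p) (pd 1 R p) (lmc 1 J p) Mm Mi hMi hMMi hRR
    (hS 1) (hRSR 1)
  have c2 := core κ (starRingEnd ℂ κ) hk (R p) (pd 2 R p) (lmc 2 J p) Mm Mi hMi hMMi hRR
    (hS 2) (hRSR 2)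
  rw [Fin.sum_univ_three]
  unfold energyDensity
  rw [hlmcJhat 0, hlmcJhat 1, hlmcJhat 2]
  simp only [Matrix.trace_add] at c0 c1 c2 ⊢
  linear_combination c0 + c1 + c2
end

section
/- Let f : ℂ → ℂ be holomorphic (as a function of z = x + iy) on an open set U ⊆ ℝ², with q = (1, f) and R = q* ⊗ q / (1 + |f|²) the 2×2 hermitian projection with entries R_{jk} = q̄_j q_k/(1+|f|²). Let J = M₁ = i(1 − 2R) be the corresponding static 1-uniton with μ = i. Then J is unitary, independent of t, and its energy density satisfies pointwise on U: ℰ₁ = −(1/2)Tr((J⁻¹J_x)² + (J⁻¹J_y)²) = 8|f′|²/(1 + |f|²)². -/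
open Matrix Complex

attribute [local instance] Matrix.frobeniusNormedAddCommGroup Matrix.frobeniusNormedSpace

noncomputable def G3 : (Fin 3 → ℝ) →L[ℝ] ℂ :=
  Complex.ofRealCLM.comp (ContinuousLinearMap.proj 1) +
    (ContinuousLinearMap.proj 2).smulRight Complex.I

lemma G3_apply (q : Fin 3 → ℝ) : G3 q = (q 1 : ℂ) + (q 2 : ℂ) * Complex.I := by
  simp [G3, Complex.real_smul]

lemma mat_decomp (a b c d : ℂ) :
    a • !![(1:ℂ),0;0,0] + b • !![(0:ℂ),1;0,0] + c • !![(0:ℂ),0;1,0] + d • !![(0:ℂ),0;0,1]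
      = !![a,b;c,d] := by
  ext i j
  fin_cases i <;> fin_cases j <;> simp

set_option maxHeartbeats 2000000 in
/-- the static `1`-uniton `J = i(1 − 2R)` with `μ = i`, built from the
hermitian projection `R = q*⊗q/(1+|f|²)`, `q = (1, f)`, `f` holomorphic in
`z = x + iy` on an open set `U`, is unitary, time independent, and has energy density
`ℰ₁ = −(1/2)Tr((J⁻¹J_x)² + (J⁻¹J_y)²) = 8|f′|²/(1+|f|²)²`. -/
theorem one_uniton_energy_density
    (U : Set ℂ) (hU : IsOpen U) (f : ℂ → ℂ) (hf : DifferentiableOn ℂ f U)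
    (R : ℂ → Matrix (Fin 2) (Fin 2) ℂ)
    (hR : R = fun z => (((1 + Complex.normSq (f z) : ℝ)) : ℂ)⁻¹ •
      !![1, f z; starRingEnd ℂ (f z), starRingEnd ℂ (f z) * f z])
    (J : (Fin 3 → ℝ) → Matrix (Fin 2) (Fin 2) ℂ)
    (hJ : J = fun p => Complex.I •
      ((1 : Matrix (Fin 2) (Fin 2) ℂ) - (2 : ℂ) • R (p 1 + p 2 * Complex.I))) :
    ∀ p : Fin 3 → ℝ, (p 1 + p 2 * Complex.I) ∈ U →
      ((J p)ᴴ * J p = 1) ∧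
      (pd 0 J p = 0) ∧
      (-(1 / 2 : ℂ) * (lmc 1 J p * lmc 1 J p + lmc 2 J p * lmc 2 J p).trace =
        ((8 * ‖deriv f (p 1 + p 2 * Complex.I)‖ ^ 2
          / (1 + ‖f (p 1 + p 2 * Complex.I)‖ ^ 2) ^ 2 : ℝ) : ℂ)) := by
  intro p hz
  set g : (Fin 3 → ℝ) → ℂ := fun q => (q 1 : ℂ) + (q 2 : ℂ) * Complex.I with hg
  set z : ℂ := g p with hzd
  have hzU : z ∈ U := hz
  have hfd : DifferentiableAt ℂ f z := hf.differentiableAt (hU.mem_nhds hzU)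
  set u : ℂ := f z with hu
  set v : ℂ := (starRingEnd ℂ) (f z) with hv
  set F' : ℂ := deriv f z with hF
  set W : ℂ := (starRingEnd ℂ) F' with hW
  have hden : ∀ w : ℂ, (((1 + Complex.normSq (f w) : ℝ)) : ℂ) = 1 + f w * (starRingEnd ℂ) (f w) := by
    intro w; rw [Complex.mul_conj]; push_cast; ring
  have hd0 : (1 : ℂ) + u * v ≠ 0 := by
    rw [hu, hv, Complex.mul_conj]
    intro h
    have h2 : (1 + Complex.normSq (f z) : ℝ) = 0 := by exact_mod_cast h
    nlinarith [Complex.normSq_nonneg (f z)]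
  have hd0' : (1 : ℂ) + v * u ≠ 0 := by rwa [mul_comm] at hd0
  have hI2 : Complex.I ^ 2 = -1 := Complex.I_sq
  have hI3 : Complex.I ^ 3 = -Complex.I := by rw [pow_succ, hI2]; ring
  have hI4 : Complex.I ^ 4 = 1 := by rw [pow_succ, hI3]; simp [Complex.I_mul_I]
  -- abbreviations
  set S : (Fin 3 → ℝ) → ℂ := fun q => (1 + f (g q) * (starRingEnd ℂ) (f (g q)))⁻¹ with hSdef
  set s : ℂ := (1 + u * v)⁻¹ with hs
  set k : ℂ := -(((1 + u * v) ^ 2)⁻¹) with hk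
  -- explicit form of J
  have hJ3 : J = fun q => !![Complex.I - 2*Complex.I*S q, -(2*Complex.I)*S q*f (g q);
      -(2*Complex.I)*S q*(starRingEnd ℂ) (f (g q)),
      Complex.I - 2*Complex.I*S q*(starRingEnd ℂ) (f (g q))*f (g q)] := by
    rw [hJ, hR]
    funext q
    ext i j
    fin_cases i <;> fin_cases j <;>
      · simp [Matrix.one_apply, hSdef, hg, hden]
        ring
  -- J p explicitly
  have hJp : J p = !![Complex.I - 2*Complex.I*s, -(2*Complex.I)*s*u;
      -(2*Complex.I)*s*v, Complex.I - 2*Complex.I*s*v*u] := by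
    rw [hJ3]
  -- conjugate transpose
  have hJH : (J p)ᴴ = !![-Complex.I + 2*Complex.I*s, 2*Complex.I*s*u;
      2*Complex.I*s*v, -Complex.I + 2*Complex.I*s*u*v] := by
    rw [hJp]
    ext i j
    fin_cases i <;> fin_cases j <;>
      simp [Matrix.conjTranspose_apply, hs, hu, hv, map_inv₀] <;> (try ring_nf) <;> (try simp) <;> (try tauto)
  -- unitarity
  have hunit : (J p)ᴴ * J p = 1 := by
    rw [hJH, hJp, Matrix.mul_fin_two]
    ext i j
    fin_cases i <;> fin_cases j <;>
      · simp [Matrix.one_apply, hs]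
        try generalize hD : (1:ℂ)+u*v = D at hd0 ⊢
        try field_simp [hd0]
        try rw [div_eq_iff (by simp [hd0])]
        all_goals try subst hD
        all_goals try ring_nf
        all_goals try simp only [hI2, hI3, hI4]
        all_goals try ring
  have hinv : (J p)⁻¹ = (J p)ᴴ := Matrix.inv_eq_left_inv hunit
  -- derivatives
  have hGd : HasFDerivAt g G3 p := by
    have : g = ⇑G3 := funext fun q => (G3_apply q).symm
    rw [this]; exact G3.hasFDerivAt
  have hUd : HasFDerivAt (fun q => f (g q))
      ((((1 : ℂ →L[ℂ] ℂ).smulRight F').restrictScalars ℝ).comp G3) p := by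
    have h1 : HasFDerivAt f ((1 : ℂ →L[ℂ] ℂ).smulRight F') z := hfd.hasDerivAt.hasFDerivAt
    exact (h1.restrictScalars ℝ).comp p hGd
  have hVd : HasFDerivAt (fun q => (starRingEnd ℂ) (f (g q)))
      ((Complex.conjCLE.toContinuousLinearMap).comp
        ((((1 : ℂ →L[ℂ] ℂ).smulRight F').restrictScalars ℝ).comp G3)) p :=
    (Complex.conjCLE.toContinuousLinearMap.hasFDerivAt).comp p hUd
  set CU := (((1 : ℂ →L[ℂ] ℂ).smulRight F').restrictScalars ℝ).comp G3 with hCU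
  set CV := (Complex.conjCLE.toContinuousLinearMap).comp CU with hCV
  have hDd : HasFDerivAt (fun q => 1 + f (g q) * (starRingEnd ℂ) (f (g q)))
      (u • CV + v • CU) p := (hUd.mul hVd).const_add 1
  set CD := u • CV + v • CU with hCD
  have hSd : HasFDerivAt S
      ((((1 : ℂ →L[ℂ] ℂ).smulRight (-(((1 + u*v) ^ 2)⁻¹))).restrictScalars ℝ).comp CD) p := by
    have h2 : HasFDerivAt (fun x : ℂ => x⁻¹)
        ((1 : ℂ →L[ℂ] ℂ).smulRight (-(((1 + u*v) ^ 2)⁻¹))) (1 + u*v) := hasFDerivAt_inv hd0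
    exact (h2.restrictScalars ℝ).comp p hDd
  set CS := (((1 : ℂ →L[ℂ] ℂ).smulRight (-(((1 + u*v) ^ 2)⁻¹))).restrictScalars ℝ).comp CD with hCS
  have hAd : HasFDerivAt (fun q => Complex.I - 2*Complex.I*S q)
      (-((2*Complex.I) • CS)) p := (hSd.const_mul (2*Complex.I)).const_sub Complex.I
  have hBd : HasFDerivAt (fun q => -(2*Complex.I)*S q*f (g q))
      ((-(2*Complex.I)*S p) • CU + f (g p) • ((-(2*Complex.I)) • CS)) p :=
    (hSd.const_mul (-(2*Complex.I))).mul hUd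
  have hCd : HasFDerivAt (fun q => -(2*Complex.I)*S q*(starRingEnd ℂ) (f (g q)))
      ((-(2*Complex.I)*S p) • CV + (starRingEnd ℂ) (f (g p)) • ((-(2*Complex.I)) • CS)) p :=
    (hSd.const_mul (-(2*Complex.I))).mul hVd
  have hEd : HasFDerivAt (fun q => Complex.I - 2*Complex.I*S q*(starRingEnd ℂ) (f (g q))*f (g q))
      (-((2*Complex.I*S p*(starRingEnd ℂ) (f (g p))) • CU +
        f (g p) • ((2*Complex.I*S p) • CV + (starRingEnd ℂ) (f (g p)) • ((2*Complex.I) • CS)))) p :=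
    (((hSd.const_mul (2*Complex.I)).mul hVd).mul hUd).const_sub Complex.I
  -- total derivative of J
  have hJ4 : J = fun q =>
      (Complex.I - 2*Complex.I*S q) • !![(1:ℂ),0;0,0] +
      (-(2*Complex.I)*S q*f (g q)) • !![(0:ℂ),1;0,0] +
      (-(2*Complex.I)*S q*(starRingEnd ℂ) (f (g q))) • !![(0:ℂ),0;1,0] +
      (Complex.I - 2*Complex.I*S q*(starRingEnd ℂ) (f (g q))*f (g q)) • !![(0:ℂ),0;0,1] := by
    rw [hJ3]; funext q; rw [mat_decomp]
  have hJd : HasFDerivAt J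
      ((((-((2*Complex.I) • CS)).smulRight !![(1:ℂ),0;0,0]) +
        (((-(2*Complex.I)*S p) • CU + f (g p) • ((-(2*Complex.I)) • CS)).smulRight !![(0:ℂ),1;0,0])) +
        (((-(2*Complex.I)*S p) • CV + (starRingEnd ℂ) (f (g p)) • ((-(2*Complex.I)) • CS)).smulRight !![(0:ℂ),0;1,0]) +
        ((-((2*Complex.I*S p*(starRingEnd ℂ) (f (g p))) • CU +
          f (g p) • ((2*Complex.I*S p) • CV + (starRingEnd ℂ) (f (g p)) • ((2*Complex.I) • CS)))).smulRight !![(0:ℂ),0;0,1])) p := by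
    rw [hJ4]
    exact (((hAd.smul_const _).add (hBd.smul_const _)).add (hCd.smul_const _)).add (hEd.smul_const _)
  have hfderiv := hJd.fderiv
  -- evaluations of G3
  have hG0 : G3 (Pi.single 0 1) = 0 := by simp [G3, Pi.single_apply]
  have hG1 : G3 (Pi.single 1 1) = 1 := by simp [G3, Pi.single_apply]
  have hG2 : G3 (Pi.single 2 1) = Complex.I := by simp [G3, Pi.single_apply]
  have hSp : S p = s := rfl
  have hup : f (g p) = u := rfl
  have hvp : (starRingEnd ℂ) (f (g p)) = v := rfl
  have hpd0 : pd 0 J p = 0 := by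
    unfold pd
    rw [hfderiv]
    simp [hCS, hCD, hCV, hCU, hG0]
  set d1 : ℂ := u * W + v * F' with hd1
  set d2 : ℂ := -(Complex.I*u*W) + Complex.I*v*F' with hd2
  have hpd1 : pd 1 J p = !![-(2*Complex.I*(k*d1)),
      (-(2*Complex.I)*s)*F' + u*(-(2*Complex.I))*(k*d1);
      (-(2*Complex.I)*s)*W + v*(-(2*Complex.I))*(k*d1),
      -(2*Complex.I*s*v*F' + u*(2*Complex.I*s*W + v*(2*Complex.I)*(k*d1)))] := by
    unfold pd
    rw [hfderiv]
    ext i j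
    fin_cases i <;> fin_cases j <;>
      · simp [hCS, hCD, hCV, hCU, hG1, hSp, hup, hvp, hk, hd1, hW]
        ring
  have hpd2 : pd 2 J p = !![-(2*Complex.I*(k*d2)),
      (-(2*Complex.I)*s)*(Complex.I*F') + u*(-(2*Complex.I))*(k*d2);
      (-(2*Complex.I)*s)*(-(Complex.I*W)) + v*(-(2*Complex.I))*(k*d2),
      -(2*Complex.I*s*v*(Complex.I*F') + u*(2*Complex.I*s*(-(Complex.I*W)) + v*(2*Complex.I)*(k*d2)))] := by
    unfold pd
    rw [hfderiv]
    ext i j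
    fin_cases i <;> fin_cases j <;>
      · simp [hCS, hCD, hCV, hCU, hG2, hSp, hup, hvp, hk, hd2, hW]
        ring
  have hL1 : lmc 1 J p = (((1+u*v)^2)⁻¹) •
      !![2*u*W - 2*v*F', 2*u^2*W + 2*F'; -(2*v^2*F') - 2*W, -(2*u*W) + 2*v*F'] := by
    unfold lmc
    rw [hinv, hJH, hpd1]
    ext i j
    fin_cases i <;> fin_cases j <;>
      · simp [Matrix.mul_apply, Fin.sum_univ_two, hs, hk, hd1]
        try generalize hD : (1:ℂ)+u*v = D at hd0 ⊢
        try field_simp [hd0]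
        try rw [div_eq_iff (by simp [hd0])]
        all_goals try subst hD
        all_goals try ring_nf
        all_goals try simp only [hI2, hI3, hI4]
        all_goals try ring
  have hL2 : lmc 2 J p = (((1+u*v)^2)⁻¹) •
      !![-(2*Complex.I*u*W) - 2*Complex.I*v*F', -(2*Complex.I*u^2*W) + 2*Complex.I*F';
         -(2*Complex.I*v^2*F') + 2*Complex.I*W, 2*Complex.I*u*W + 2*Complex.I*v*F'] := by
    unfold lmc
    rw [hinv, hJH, hpd2]
    ext i j
    fin_cases i <;> fin_cases j <;>
      · simp [Matrix.mul_apply, Fin.sum_univ_two, hs, hk, hd2]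
        try generalize hD : (1:ℂ)+u*v = D at hd0 ⊢
        try field_simp [hd0]
        try rw [div_eq_iff (by simp [hd0])]
        all_goals try subst hD
        all_goals try ring_nf
        all_goals try simp only [hI2, hI3, hI4]
        all_goals try ring
  refine ⟨hunit, hpd0, ?_⟩
  rw [hL1, hL2]
  have habs1 : ((‖deriv f (↑(p 1) + ↑(p 2) * Complex.I)‖ : ℝ) : ℂ) ^ 2 = F' * W := by
    rw [hW, hF, ← Complex.ofReal_pow]
    rw [← Complex.normSq_eq_norm_sq]
    exact (Complex.mul_conj _).symm
  have habs2 : ((‖f (↑(p 1) + ↑(p 2) * Complex.I)‖ : ℝ) : ℂ) ^ 2 = u * v := by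
    rw [hu, hv, ← Complex.ofReal_pow]
    rw [← Complex.normSq_eq_norm_sq]
    exact (Complex.mul_conj _).symm
  push_cast
  rw [habs1, habs2]
  simp only [Matrix.smul_mul, Matrix.mul_smul, smul_smul, Matrix.trace_add, Matrix.trace_smul, smul_eq_mul,
    Matrix.mul_fin_two, Matrix.trace_fin_two_of]
  generalize hD : (1:ℂ)+u*v = D at hd0 ⊢
  field_simp [hd0]
  try rw [div_eq_iff (by simp [hd0])]
  try subst hD
  try ring_nf
  try simp only [hI2, hI3, hI4]
  try ring
end
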